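/- In the ring S = k[x₀,x₁,y₀,y₁], let A be a product of pairwise non-associate linear forms in x₀,x₁ and B a product of pairwise non-associate linear forms in y₀,y₁. Then A, B form a regular sequence in S, and the ideal (A,B) is the intersection ⋂ (L, L') over all pairs (L, L') with L a linear factor of A and L' a linear factor of B. -/

import Mathlib

open MvPolynomial

namespace CI17

variable {k : Type*} [Field k]

/-- Substitution killing variable `i`. -/
noncomputable def evAt (i : Fin 4) : MvPolynomial (Fin 4) k →ₐ[k] MvPolynomial (Fin 4) k :=
  aeval (fun t => if t = i then 0 else X t)

lemma evAt_X (i t : Fin 4) :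
    evAt (k := k) i (X t) = if t = i then 0 else X t := aeval_X _ _

lemma evAt_C (i : Fin 4) (c : k) : evAt i (C c) = C c := aeval_C _ _

lemma X_dvd_sub_evAt (i : Fin 4) (f : MvPolynomial (Fin 4) k) :
    (X i : MvPolynomial (Fin 4) k) ∣ f - evAt i f := by
  induction f using MvPolynomial.induction_on with
  | C a => simp [evAt_C]
  | add p q hp hq =>
    rw [map_add, add_sub_add_comm]
    exact dvd_add hp hq
  | mul_X p t hp =>
    by_cases h : t = i
    · subst h
      rw [map_mul, evAt_X, if_pos rfl, mul_zero, sub_zero]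
      exact dvd_mul_left _ _
    · have e : p * X t - evAt i p * X t = (p - evAt i p) * X t := by ring
      rw [map_mul, evAt_X, if_neg h, e]
      exact hp.mul_right _

lemma mem_span_X_iff (i : Fin 4) (f : MvPolynomial (Fin 4) k) :
    f ∈ Ideal.span {(X i : MvPolynomial (Fin 4) k)} ↔ evAt i f = 0 := by
  rw [Ideal.mem_span_singleton]
  constructor
  · rintro ⟨c, rfl⟩
    rw [map_mul, evAt_X, if_pos rfl, zero_mul]
  · intro h
    have h2 := X_dvd_sub_evAt (k := k) i f
    rwa [h, sub_zero] at h2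

lemma mem_span_X_pair_iff (i : Fin 4) (g f : MvPolynomial (Fin 4) k)
    (hg : evAt i g = g) :
    f ∈ Ideal.span {(X i : MvPolynomial (Fin 4) k), g} ↔ g ∣ evAt i f := by
  rw [Ideal.mem_span_pair]
  constructor
  · rintro ⟨u, v, rfl⟩
    rw [map_add, map_mul, map_mul, evAt_X, if_pos rfl, mul_zero, zero_add, hg]
    exact Dvd.intro_left _ rfl
  · rintro ⟨c, hc⟩
    obtain ⟨w, hw⟩ := X_dvd_sub_evAt (k := k) i f
    refine ⟨w, c, ?_⟩
    rw [hc] at hw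
    linear_combination -hw

lemma primeX (i : Fin 4) : Prime (X i : MvPolynomial (Fin 4) k) := by
  have h0 : Prime (X 0 : MvPolynomial (Fin 4) k) := by
    rw [← MulEquiv.prime_iff (MvPolynomial.finSuccEquiv k 3).toRingEquiv.toMulEquiv]
    have : (MvPolynomial.finSuccEquiv k 3) (X 0) = Polynomial.X :=
      finSuccEquiv_X_zero
    simpa [this] using Polynomial.prime_X
  rw [← MulEquiv.prime_iff (MvPolynomial.renameEquiv k (Equiv.swap i 0)).toRingEquiv.toMulEquiv]
  simpa [renameEquiv_apply, rename_X] using h0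



/-- Linear change of variables in coordinates `i, j`. -/
noncomputable def lchg (i j : Fin 4) (u v w z : k) :
    MvPolynomial (Fin 4) k →ₐ[k] MvPolynomial (Fin 4) k :=
  aeval (fun t => if t = i then C u * X i + C v * X j
    else if t = j then C w * X i + C z * X j else X t)

lemma lchg_X_i (i j : Fin 4) (u v w z : k) :
    lchg i j u v w z (X i) = C u * X i + C v * X j := by
  rw [lchg, aeval_X, if_pos rfl]

lemma lchg_X_other (i j : Fin 4) (u v w z : k) {t : Fin 4} (hti : t ≠ i) (htj : t ≠ j) :
    lchg i j u v w z (X t) = X t := by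
  rw [lchg, aeval_X, if_neg hti, if_neg htj]

lemma lchg_lin {i j : Fin 4} (hij : i ≠ j) (u v w z p q : k) :
    lchg i j u v w z (C p * X i + C q * X j)
      = C (p * u + q * w) * X i + C (p * v + q * z) * X j := by
  have hji : j ≠ i := hij.symm
  rw [map_add, map_mul, map_mul, lchg, aeval_C, aeval_C, aeval_X, aeval_X,
    if_pos rfl, if_neg hji, if_pos rfl]
  simp only [MvPolynomial.algebraMap_eq, C_mul, map_add]
  ring

lemma lchg_inv {i j : Fin 4} (hij : i ≠ j) {u v w z : k} (h : u * z - v * w = 1)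
    (f : MvPolynomial (Fin 4) k) :
    lchg i j z (-v) (-w) u (lchg i j u v w z f) = f := by
  have hC : (C u * C z - C v * C w : MvPolynomial (Fin 4) k) = 1 := by
    rw [← C_mul, ← C_mul, ← C_sub, h, C_1]
  have key : (lchg (k := k) i j z (-v) (-w) u).comp (lchg i j u v w z)
      = AlgHom.id k _ := by
    apply MvPolynomial.algHom_ext
    intro t
    rw [AlgHom.comp_apply, AlgHom.id_apply]
    by_cases hti : t = i
    · subst hti
      rw [lchg_X_i, lchg_lin hij]
      have e1 : u * z + v * -w = 1 := by linear_combination h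
      have e2 : u * -v + v * u = 0 := by ring
      rw [e1, e2, C_1, one_mul, C_0, zero_mul, add_zero]
    · by_cases htj : t = j
      · rw [htj]
        have e0 : lchg (k := k) i j u v w z (X j) = C w * X i + C z * X j := by
          rw [lchg, aeval_X, if_neg hij.symm, if_pos rfl]
        rw [e0, lchg_lin hij]
        have e1 : w * z + z * -w = 0 := by ring
        have e2 : w * -v + z * u = 1 := by linear_combination h
        rw [e1, e2, C_1, one_mul, C_0, zero_mul, zero_add]
      · rw [lchg_X_other _ _ _ _ _ _ hti htj, lchg_X_other _ _ _ _ _ _ hti htj]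
  exact AlgHom.congr_fun key f

lemma mem_span_pair_map (φ : MvPolynomial (Fin 4) k →ₐ[k] MvPolynomial (Fin 4) k)
    {p q f : MvPolynomial (Fin 4) k} (h : f ∈ Ideal.span {p, q}) :
    φ f ∈ Ideal.span {φ p, φ q} := by
  rw [Ideal.mem_span_pair] at h ⊢
  obtain ⟨u, v, hf⟩ := h
  exact ⟨φ u, φ v, by rw [← map_mul, ← map_mul, ← map_add, hf]⟩




lemma linear_bundle {i j : Fin 4} (hij : i ≠ j) {p q : k} (hpq : ¬(p = 0 ∧ q = 0)) :
    ∃ σ τ : MvPolynomial (Fin 4) k →ₐ[k] MvPolynomial (Fin 4) k,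
      (∀ f, σ (τ f) = f) ∧ (∀ f, τ (σ f) = f) ∧
      τ (C p * X i + C q * X j) = X i ∧
      σ (X i) = C p * X i + C q * X j ∧
      (∀ t, t ≠ i → t ≠ j → τ (X t) = X t ∧ σ (X t) = X t) ∧
      (∀ p' q' : k, ∃ α : k, τ (C p' * X i + C q' * X j)
        = C α * X i + C (p * q' - q * p') * X j) := by
  obtain ⟨w, z, hdet⟩ : ∃ w z : k, p * z - q * w = 1 := by
    rcases eq_or_ne p 0 with hp | hp
    · have hq : q ≠ 0 := fun h => hpq ⟨hp, h⟩
      exact ⟨-q⁻¹, 0, by field_simp; ring⟩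
    · exact ⟨0, p⁻¹, by field_simp; ring⟩
  refine ⟨lchg i j p q w z, lchg i j z (-q) (-w) p, ?_, ?_, ?_, ?_, ?_, ?_⟩
  · intro f
    have hdet' : z * p - -q * -w = 1 := by linear_combination hdet
    simpa using lchg_inv hij hdet' f
  · intro f
    exact lchg_inv hij hdet f
  · rw [lchg_lin hij]
    rw [show p * z + q * -w = 1 by linear_combination hdet,
      show p * -q + q * p = 0 by ring, C_1, C_0, one_mul, zero_mul, add_zero]
  · exact lchg_X_i i j p q w z
  · exact fun t hti htj =>
      ⟨lchg_X_other i j z (-q) (-w) p hti htj, lchg_X_other i j p q w z hti htj⟩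
  · intro p' q'
    refine ⟨p' * z + q' * -w, ?_⟩
    rw [lchg_lin hij, show p' * -q + q' * p = p * q' - q * p' by ring]

lemma prime_linear {i j : Fin 4} (hij : i ≠ j) {p q : k} (hpq : ¬(p = 0 ∧ q = 0)) :
    Prime (C p * X i + C q * X j : MvPolynomial (Fin 4) k) := by
  obtain ⟨σ, τ, hστ, -, hτL, -, -, -⟩ := linear_bundle hij hpq
  refine comap_prime τ σ hστ ?_
  rw [hτL]
  exact primeX i

lemma prod_dvd {ι : Type*} (s : Finset ι) (P : ι → MvPolynomial (Fin 4) k)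
    (hp : ∀ i ∈ s, Prime (P i))
    (hnd : ∀ i ∈ s, ∀ j ∈ s, i ≠ j → ¬ P i ∣ P j) {x : MvPolynomial (Fin 4) k}
    (hx : ∀ i ∈ s, P i ∣ x) : (∏ i ∈ s, P i) ∣ x := by
  classical
  revert hp hnd hx
  induction s using Finset.induction_on with
  | empty => simp
  | @insert j s hj ih =>
    intro hp hnd hx
    have hPs : (∏ i ∈ s, P i) ∣ x :=
      ih (fun i hi => hp i (Finset.mem_insert_of_mem hi))
        (fun i hi i' hi' h =>
          hnd i (Finset.mem_insert_of_mem hi) i' (Finset.mem_insert_of_mem hi') h)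
        (fun i hi => hx i (Finset.mem_insert_of_mem hi))
    obtain ⟨y, hy⟩ := hPs
    have hj1 : Prime (P j) := hp j (Finset.mem_insert_self j s)
    have hjx : P j ∣ (∏ i ∈ s, P i) * y := hy ▸ hx j (Finset.mem_insert_self j s)
    rcases hj1.2.2 _ _ hjx with h | h
    · obtain ⟨i, hi, hdvd⟩ := (hj1.dvd_finset_prod_iff _).mp h
      exact absurd hdvd (hnd j (Finset.mem_insert_self j s) i (Finset.mem_insert_of_mem hi)
        (fun e => hj (e ▸ hi)))
    · obtain ⟨z, hz⟩ := h
      rw [Finset.prod_insert hj]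
      exact ⟨z, by rw [hy, hz]; ring⟩


lemma algHomC (phi : MvPolynomial (Fin 4) k →ₐ[k] MvPolynomial (Fin 4) k) (c : k) :
    phi (C c) = C c := by
  simpa [MvPolynomial.algebraMap_eq] using phi.commutes c

lemma not_dvd_of_eval {f g : MvPolynomial (Fin 4) k} (pt : Fin 4 → k)
    (hf : eval pt f = 0) (hg : eval pt g ≠ 0) : ¬ f ∣ g := by
  rintro ⟨c, rfl⟩
  rw [map_mul, hf, zero_mul] at hg
  exact hg rfl

end CI17


open CI17

theorem product_linear_forms_ci {k : Type*} [Field k] [IsAlgClosed k] [CharZero k]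
    (a b : ℕ) (R : Fin a → k × k) (Q : Fin b → k × k)
    (hR0 : ∀ m, R m ≠ 0) (hQ0 : ∀ n, Q n ≠ 0)
    (hRdist : ∀ m m', m ≠ m' → (R m).1 * (R m').2 ≠ (R m).2 * (R m').1)
    (hQdist : ∀ n n', n ≠ n' → (Q n).1 * (Q n').2 ≠ (Q n).2 * (Q n').1)
    (L : Fin a → MvPolynomial (Fin 4) k) (L' : Fin b → MvPolynomial (Fin 4) k)
    (hL : ∀ m, L m = C (R m).1 * X 0 + C (R m).2 * X 1)
    (hL' : ∀ n, L' n = C (Q n).1 * X 2 + C (Q n).2 * X 3) :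
    (∀ x : MvPolynomial (Fin 4) k, (∏ m, L m) * x = 0 → x = 0) ∧
    (∀ x : MvPolynomial (Fin 4) k,
      (∏ n, L' n) * x ∈ Ideal.span {∏ m, L m} → x ∈ Ideal.span {∏ m, L m}) ∧
    Ideal.span {∏ m, L m, ∏ n, L' n} = ⨅ m, ⨅ n, Ideal.span {L m, L' n} := by
  classical
  have hRne : ∀ m, ¬((R m).1 = 0 ∧ (R m).2 = 0) := fun m h => hR0 m (Prod.ext h.1 h.2)
  have hQne : ∀ n, ¬((Q n).1 = 0 ∧ (Q n).2 = 0) := fun n h => hQ0 n (Prod.ext h.1 h.2)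
  have h01 : (0 : Fin 4) ≠ 1 := by decide
  have h23 : (2 : Fin 4) ≠ 3 := by decide
  have hLp : ∀ m, Prime (L m) := fun m => by
    rw [hL m]; exact prime_linear h01 (hRne m)
  have hL'p : ∀ n, Prime (L' n) := fun n => by
    rw [hL' n]; exact prime_linear h23 (hQne n)
  have ndL : ∀ m m', m ≠ m' → ¬ L m ∣ L m' := by
    intro m m' hmm'
    refine not_dvd_of_eval
      (fun t => if t = 0 then -(R m).2 else if t = 1 then (R m).1 else 0) ?_ ?_
    · rw [hL m]; simp; ring
    · rw [hL m']
      have he : eval (fun t : Fin 4 => if t = 0 then -(R m).2 else if t = 1 then (R m).1 else 0)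
          (C (R m').1 * X 0 + C (R m').2 * X 1)
          = (R m').1 * (-(R m).2) + (R m').2 * (R m).1 := by simp
      rw [he]
      intro h0
      exact hRdist m m' hmm' (by linear_combination h0)
  have ndL' : ∀ n n', n ≠ n' → ¬ L' n ∣ L' n' := by
    intro n n' hnn'
    refine not_dvd_of_eval
      (fun t => if t = 2 then -(Q n).2 else if t = 3 then (Q n).1 else 0) ?_ ?_
    · rw [hL' n]; simp; ring
    · rw [hL' n']
      have he : eval (fun t : Fin 4 => if t = 2 then -(Q n).2 else if t = 3 then (Q n).1 else 0)
          (C (Q n').1 * X 2 + C (Q n').2 * X 3)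
          = (Q n').1 * (-(Q n).2) + (Q n').2 * (Q n).1 := by simp
      rw [he]
      intro h0
      exact hQdist n n' hnn' (by linear_combination h0)
  have ndLL' : ∀ m n, ¬ L m ∣ L' n := by
    intro m n
    rcases eq_or_ne (Q n).1 0 with hq | hq
    · have hq2 : (Q n).2 ≠ 0 := fun h => hQne n ⟨hq, h⟩
      apply not_dvd_of_eval
        (fun t => if t = 0 then -(R m).2 else if t = 1 then (R m).1 else if t = 3 then 1 else 0)
      · rw [hL m]; simp; ring
      · rw [hL' n]; simp [hq2]
    · apply not_dvd_of_eval
        (fun t => if t = 0 then -(R m).2 else if t = 1 then (R m).1 else if t = 2 then 1 else 0)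
      · rw [hL m]; simp; ring
      · rw [hL' n]; simp [hq]
  have ndX1 : ∀ n, ¬ L' n ∣ X 1 := by
    intro n
    apply not_dvd_of_eval (fun t => if t = 2 then -(Q n).2 else if t = 3 then (Q n).1 else 1)
    · rw [hL' n]; simp; ring
    · simp
  have hAne : (∏ m, L m) ≠ 0 := Finset.prod_ne_zero_iff.mpr (fun m _ => (hLp m).ne_zero)
  have hone : (1 : Fin 4) ≠ 0 := by decide
  have htwo : (2 : Fin 4) ≠ 0 := by decide
  have hthree : (3 : Fin 4) ≠ 0 := by decide
  have hevL' : ∀ n, evAt 0 (L' n) = L' n := fun n => by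
    rw [hL' n, map_add, map_mul, map_mul, evAt_C, evAt_C, evAt_X, evAt_X,
      if_neg htwo, if_neg hthree]
  have hevB : evAt 0 (∏ n, L' n) = ∏ n, L' n := by
    rw [map_prod]; exact Finset.prod_congr rfl fun n _ => hevL' n
  refine ⟨fun x hx => ?_, fun x hx => ?_, ?_⟩
  · rcases mul_eq_zero.mp hx with h | h
    · exact absurd h hAne
    · exact h
  · rw [Ideal.mem_span_singleton] at hx ⊢
    apply prod_dvd Finset.univ L (fun m _ => hLp m) (fun m _ m' _ h => ndL m m' h)
    intro m _
    have h1 : L m ∣ (∏ n, L' n) * x :=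
      dvd_trans (Finset.dvd_prod_of_mem L (Finset.mem_univ m)) hx
    rcases (hLp m).2.2 _ _ h1 with h | h
    · obtain ⟨n, -, hn⟩ := ((hLp m).dvd_finset_prod_iff _).mp h
      exact absurd hn (ndLL' m n)
    · exact h
  · have stepA : ∀ (m : Fin a) (f : MvPolynomial (Fin 4) k),
        (∀ n, f ∈ Ideal.span {L m, L' n}) → f ∈ Ideal.span {L m, ∏ n, L' n} := by
      intro m f hf
      obtain ⟨σ, τ, hστ, hτσ, hτL0, hσX0, hfix, hτlin⟩ := linear_bundle h01 (hRne m)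
      have hτL : τ (L m) = X 0 := by rw [hL m]; exact hτL0
      have hσX : σ (X 0) = L m := by rw [hL m]; exact hσX0
      have hτL' : ∀ n, τ (L' n) = L' n := fun n => by
        rw [hL' n, map_add, map_mul, map_mul, algHomC, algHomC,
          (hfix 2 (by decide) (by decide)).1, (hfix 3 (by decide) (by decide)).1]
      have hσL' : ∀ n, σ (L' n) = L' n := fun n => by
        rw [hL' n, map_add, map_mul, map_mul, algHomC, algHomC,
          (hfix 2 (by decide) (by decide)).2, (hfix 3 (by decide) (by decide)).2]
      have hσB : σ (∏ n, L' n) = ∏ n, L' n := by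
        rw [map_prod]; exact Finset.prod_congr rfl fun n _ => hσL' n
      have h1 : ∀ n, L' n ∣ evAt 0 (τ f) := by
        intro n
        have h2 := mem_span_pair_map τ (hf n)
        rw [hτL, hτL' n] at h2
        exact (mem_span_X_pair_iff 0 _ _ (hevL' n)).mp h2
      have hB : (∏ n, L' n) ∣ evAt 0 (τ f) :=
        prod_dvd Finset.univ L' (fun n _ => hL'p n) (fun n _ n' _ h => ndL' n n' h)
          (fun n _ => h1 n)
      have h3 : τ f ∈ Ideal.span {X 0, ∏ n, L' n} :=
        (mem_span_X_pair_iff 0 _ _ hevB).mpr hB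
      have h4 := mem_span_pair_map σ h3
      rw [hσX, hσB, hστ f] at h4
      exact h4
    have stepB : ∀ (f : MvPolynomial (Fin 4) k),
        (∀ m, f ∈ Ideal.span {L m, ∏ n, L' n}) →
        ∀ s : Finset (Fin a), f ∈ Ideal.span {∏ m ∈ s, L m, ∏ n, L' n} := by
      intro f hf s
      induction s using Finset.induction_on with
      | empty => exact Ideal.mem_span_pair.mpr ⟨f, 0, by simp⟩
      | @insert j s hj ih =>
        obtain ⟨α, β, hαβ⟩ := Ideal.mem_span_pair.mp ih
        obtain ⟨σ, τ, hστ, hτσ, hτL0, hσX0, hfix, hτlin⟩ := linear_bundle h01 (hRne j)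
        have hτL : τ (L j) = X 0 := by rw [hL j]; exact hτL0
        have hσX : σ (X 0) = L j := by rw [hL j]; exact hσX0
        have hτL' : ∀ n, τ (L' n) = L' n := fun n => by
          rw [hL' n, map_add, map_mul, map_mul, algHomC, algHomC,
            (hfix 2 (by decide) (by decide)).1, (hfix 3 (by decide) (by decide)).1]
        have hσL' : ∀ n, σ (L' n) = L' n := fun n => by
          rw [hL' n, map_add, map_mul, map_mul, algHomC, algHomC,
            (hfix 2 (by decide) (by decide)).2, (hfix 3 (by decide) (by decide)).2]
        have hτB : τ (∏ n, L' n) = ∏ n, L' n := by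
          rw [map_prod]; exact Finset.prod_congr rfl fun n _ => hτL' n
        have hσB : σ (∏ n, L' n) = ∏ n, L' n := by
          rw [map_prod]; exact Finset.prod_congr rfl fun n _ => hσL' n
        have h2 := mem_span_pair_map τ (hf j)
        rw [hτL, hτB] at h2
        have hBf : (∏ n, L' n) ∣ evAt 0 (τ f) :=
          (mem_span_X_pair_iff 0 _ _ hevB).mp h2
        have hfe : τ f = τ α * τ (∏ m' ∈ s, L m') + τ β * (∏ n, L' n) := by
          rw [← hτB, ← map_mul, ← map_mul, ← map_add, hαβ]
        choose γ hγ using fun m' => hτlin (R m').1 (R m').2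
        have hτLi : ∀ i : Fin a, evAt 0 (τ (L i))
            = C ((R j).1 * (R i).2 - (R j).2 * (R i).1) * X 1 := fun i => by
          rw [hL i, hγ i, map_add, map_mul, map_mul, evAt_C, evAt_C,
            evAt_X, evAt_X, if_pos rfl, if_neg hone, mul_zero, zero_add]
        have hevP : evAt 0 (τ (∏ m' ∈ s, L m'))
            = ∏ m' ∈ s, (C ((R j).1 * (R m').2 - (R j).2 * (R m').1) * X 1) := by
          rw [map_prod, map_prod]
          exact Finset.prod_congr rfl fun i _ => hτLi i
        have hndP : ∀ n, ¬ L' n ∣ evAt 0 (τ (∏ m' ∈ s, L m')) := by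
          intro n hdvd
          rw [hevP] at hdvd
          obtain ⟨i, hi, hdvd2⟩ := ((hL'p n).dvd_finset_prod_iff _).mp hdvd
          have hc : (R j).1 * (R i).2 - (R j).2 * (R i).1 ≠ 0 := by
            intro h0
            exact hRdist j i (fun e => hj (e ▸ hi)) (by linear_combination h0)
          apply ndX1 n
          have hX1 : (X 1 : MvPolynomial (Fin 4) k)
              = C ((R j).1 * (R i).2 - (R j).2 * (R i).1)⁻¹
                * (C ((R j).1 * (R i).2 - (R j).2 * (R i).1) * X 1) := by
            rw [← mul_assoc, ← C_mul, inv_mul_cancel₀ hc, C_1, one_mul]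
          rw [hX1]
          exact hdvd2.mul_left _
        have h6 : evAt 0 (τ f) = evAt 0 (τ α) * evAt 0 (τ (∏ m' ∈ s, L m'))
            + evAt 0 (τ β) * (∏ n, L' n) := by
          rw [hfe, map_add, map_mul, map_mul, hevB]
        have h5 : (∏ n, L' n) ∣ evAt 0 (τ α) * evAt 0 (τ (∏ m' ∈ s, L m')) := by
          have h9 := hBf
          rw [h6] at h9
          have h10 := dvd_sub h9 (dvd_mul_left (∏ n, L' n) (evAt 0 (τ β)))
          simpa using h10
        have hBα : (∏ n, L' n) ∣ evAt 0 (τ α) := by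
          apply prod_dvd Finset.univ L' (fun n _ => hL'p n) (fun n _ n' _ h => ndL' n n' h)
          intro n _
          have hU : L' n ∣ evAt 0 (τ α) * evAt 0 (τ (∏ m' ∈ s, L m')) :=
            dvd_trans (Finset.dvd_prod_of_mem L' (Finset.mem_univ n)) h5
          rcases (hL'p n).2.2 _ _ hU with h | h
          · exact h
          · exact absurd h (hndP n)
        have h7 : τ α ∈ Ideal.span {X 0, ∏ n, L' n} :=
          (mem_span_X_pair_iff 0 _ _ hevB).mpr hBα
        have h8 := mem_span_pair_map σ h7
        rw [hσX, hσB, hστ α] at h8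
        obtain ⟨γ', δ, hγδ⟩ := Ideal.mem_span_pair.mp h8
        rw [Finset.prod_insert hj]
        exact Ideal.mem_span_pair.mpr ⟨γ', δ * (∏ m' ∈ s, L m') + β, by
          linear_combination (∏ m' ∈ s, L m') * hγδ + hαβ⟩
    apply le_antisymm
    · refine le_iInf fun m => le_iInf fun n => ?_
      rw [Ideal.span_le]
      rintro x hx
      simp only [Set.mem_insert_iff, Set.mem_singleton_iff] at hx
      rcases hx with rfl | rfl
      · obtain ⟨c, hc⟩ := Finset.dvd_prod_of_mem L (Finset.mem_univ m)
        rw [hc]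
        exact Ideal.mul_mem_right _ _ (Ideal.subset_span (by simp))
      · obtain ⟨c, hc⟩ := Finset.dvd_prod_of_mem L' (Finset.mem_univ n)
        rw [hc]
        exact Ideal.mul_mem_right _ _ (Ideal.subset_span (by simp))
    · intro f hf
      simp only [Ideal.mem_iInf] at hf
      exact stepB f (fun m => stepA m f (fun n => hf m n)) Finset.univ
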